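/- Let f* be an optimal (one-to-one) compressor for a finite-valued random variable X, i.e. the injection into binary strings minimizing P(ℓ(f(X)) ≥ t) simultaneously for all t (attained by ordering outcomes by decreasing probability). Then for any k > 0 and τ > 0: P[ℓ(f*(X)) ≥ k−1] > P[−log₂ P(X) ≥ k + τ] − 2^{−τ}. -/

import Mathlib

open Finset

/-- One-shot converse for optimal one-to-one compression: if `f` is an optimal
injective compressor of `X ~ P` (minimizing `P(ℓ(f(X)) ≥ t)` for every
threshold `t`), then for all `k > 0`, `τ > 0`,
`P[ℓ(f(X)) ≥ k - 1] > P[-log₂ P(X) ≥ k + τ] - 2^{-τ}`. -/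
theorem one_shot_converse {A : Type*} [Fintype A] [DecidableEq A]
    (P : A → ℝ) (hnonneg : ∀ a, 0 ≤ P a) (hsum : ∑ a, P a = 1)
    (f : A → List Bool) (hinj : Function.Injective f)
    (hopt : ∀ g : A → List Bool, Function.Injective g → ∀ t : ℝ,
      ∑ a ∈ univ.filter (fun a => t ≤ ((f a).length : ℝ)), P a ≤
        ∑ a ∈ univ.filter (fun a => t ≤ ((g a).length : ℝ)), P a)
    (k τ : ℝ) (hk : 0 < k) (hτ : 0 < τ) :
    ∑ a ∈ univ.filter (fun a => k - 1 ≤ ((f a).length : ℝ)), P a >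
      (∑ a ∈ univ.filter (fun a => k + τ ≤ -Real.logb 2 (P a)), P a)
        - (2 : ℝ) ^ (-τ) := by
  classical
  set N : ℕ := ⌈k - 1⌉₊ with hN
  -- the encoding of binary strings into positive naturals
  set e : List Bool → ℕ := fun l => Nat.ofDigits 2 (l.map (fun b => cond b 1 0) ++ [1])
    with he
  have hdigok : ∀ l : List Bool, ∀ d ∈ l.map (fun b => cond b 1 0) ++ [1], d < 2 := by
    intro l d hd
    rcases List.mem_append.1 hd with h | h
    · rcases List.mem_map.1 h with ⟨b, _, rfl⟩; cases b <;> simp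
    · simp at h; omega
  have hdig : ∀ l : List Bool,
      Nat.digits 2 (e l) = l.map (fun b => cond b 1 0) ++ [1] := by
    intro l
    refine Nat.digits_ofDigits 2 (by norm_num) _ (hdigok l) ?_
    intro h
    rw [List.getLast_append]
    norm_num
  have heinj : Function.Injective e := by
    intro l l' hll
    have h1 := hdig l
    rw [hll, hdig l'] at h1
    have hlen : (l'.map (fun b => cond b 1 0)).length
        = (l.map (fun b => cond b 1 0)).length := by
      have := congrArg List.length h1
      simpa using this
    have h2 : l'.map (fun b => cond b 1 0) = l.map (fun b => cond b 1 0) :=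
      List.append_inj_left h1 hlen
    have h2 := h2.symm
    have hcinj : Function.Injective (fun b : Bool => cond b 1 0) := by
      intro x y hxy; cases x <;> cases y <;> revert hxy <;> decide
    exact List.map_injective_iff.2 hcinj h2
  have hebound : ∀ l : List Bool, e l < 2 ^ (l.length + 1) := by
    intro l
    have := Nat.ofDigits_lt_base_pow_length (b := 2) (l := l.map (fun b => cond b 1 0) ++ [1])
      (by norm_num) (hdigok l)
    simpa using this
  -- the "short codeword" set
  set T : Finset A := univ.filter (fun a => ¬ (k - 1 ≤ ((f a).length : ℝ))) with hT
  have hcardTnat : T.card ≤ 2 ^ N := by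
    have : T.card ≤ (Finset.range (2 ^ N)).card := by
      apply Finset.card_le_card_of_injOn (fun a => e (f a))
      · intro a ha
        rw [hT, Finset.mem_coe, Finset.mem_filter] at ha
        have hlt : ((f a).length : ℝ) < k - 1 := not_le.1 ha.2
        have hlen : (f a).length < N := Nat.lt_ceil.2 hlt
        have : e (f a) < 2 ^ N :=
          lt_of_lt_of_le (hebound (f a)) (Nat.pow_le_pow_right (by norm_num) (by omega))
        simpa [Finset.mem_range] using this
      · intro a _ b _ hab
        exact hinj (heinj hab)
    simpa using this
  have hNk : (N : ℝ) < k := by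
    by_cases hk1 : 0 ≤ k - 1
    · have := Nat.ceil_lt_add_one hk1
      rw [← hN] at this
      linarith
    · have : N = 0 := by
        rw [hN, Nat.ceil_eq_zero]
        linarith
      rw [this]
      simpa using hk
  -- each element of the RHS event has small probability
  set Sf : Finset A := univ.filter (fun a => k + τ ≤ -Real.logb 2 (P a)) with hSf
  have hS_each : ∀ a ∈ Sf, P a ≤ (2 : ℝ) ^ (-(k + τ)) := by
    intro a ha
    rw [hSf, Finset.mem_filter] at ha
    have hcond := ha.2
    by_cases hPa : P a = 0
    · rw [hPa] at hcond
      simp [Real.logb] at hcond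
      linarith
    · have hpos : 0 < P a := lt_of_le_of_ne (hnonneg a) (Ne.symm hPa)
      have hlog : Real.logb 2 (P a) ≤ -(k + τ) := by linarith
      calc P a = (2 : ℝ) ^ Real.logb 2 (P a) :=
            (Real.rpow_logb (by norm_num) (by norm_num) hpos).symm
        _ ≤ (2 : ℝ) ^ (-(k + τ)) :=
            (Real.rpow_le_rpow_left_iff (by norm_num)).2 hlog
  -- the sum over Sf ∩ T is < 2^{-τ}
  have hkey : ∑ a ∈ Sf ∩ T, P a < (2 : ℝ) ^ (-τ) := by
    have h1 : ∑ a ∈ Sf ∩ T, P a ≤ (Sf ∩ T).card • (2 : ℝ) ^ (-(k + τ)) := by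
      apply Finset.sum_le_card_nsmul
      intro a ha
      exact hS_each a (Finset.mem_of_mem_inter_left ha)
    rw [nsmul_eq_mul] at h1
    have hcard : ((Sf ∩ T).card : ℝ) ≤ (2 : ℝ) ^ (N : ℝ) := by
      have h2 : (Sf ∩ T).card ≤ T.card := Finset.card_le_card (Finset.inter_subset_right)
      have h3 : (Sf ∩ T).card ≤ 2 ^ N := le_trans h2 hcardTnat
      calc ((Sf ∩ T).card : ℝ) ≤ ((2 ^ N : ℕ) : ℝ) := by exact_mod_cast h3
        _ = (2 : ℝ) ^ (N : ℝ) := by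
            rw [Nat.cast_pow]
            exact (Real.rpow_natCast 2 N).symm
    have hppos : (0 : ℝ) < (2 : ℝ) ^ (-(k + τ)) := Real.rpow_pos_of_pos (by norm_num) _
    have h4 : ((Sf ∩ T).card : ℝ) * (2 : ℝ) ^ (-(k + τ))
        ≤ (2 : ℝ) ^ (N : ℝ) * (2 : ℝ) ^ (-(k + τ)) :=
      mul_le_mul_of_nonneg_right hcard (le_of_lt hppos)
    have h5 : (2 : ℝ) ^ (N : ℝ) * (2 : ℝ) ^ (-(k + τ)) = (2 : ℝ) ^ ((N : ℝ) - (k + τ)) := by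
      rw [← Real.rpow_add (by norm_num)]
      ring_nf
    have h6 : (2 : ℝ) ^ ((N : ℝ) - (k + τ)) < (2 : ℝ) ^ (-τ) := by
      apply Real.rpow_lt_rpow_left_iff (by norm_num : (1:ℝ) < 2) |>.2
      linarith
    linarith
  -- split the sum over Sf
  have hsplit : ∑ a ∈ Sf, P a = (∑ a ∈ Sf ∩ T, P a) + ∑ a ∈ Sf \ T, P a := by
    rw [Finset.sum_inter_add_sum_sdiff]
  have hsub : Sf \ T ⊆ univ.filter (fun a => k - 1 ≤ ((f a).length : ℝ)) := by
    intro a ha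
    rw [Finset.mem_sdiff, hT, Finset.mem_filter] at ha
    rw [Finset.mem_filter]
    refine ⟨Finset.mem_univ a, ?_⟩
    by_contra hcon
    exact ha.2 (Finset.mem_filter.2 ⟨Finset.mem_univ a, hcon⟩)
  have hle : ∑ a ∈ Sf \ T, P a ≤ ∑ a ∈ univ.filter (fun a => k - 1 ≤ ((f a).length : ℝ)), P a :=
    Finset.sum_le_sum_of_subset_of_nonneg hsub (fun a _ _ => hnonneg a)
  linarith
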